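/- If F is an NBUE life distribution with finite mean μ > 0, then for all x ≥ 0, ∫_x^∞ (1 - F(t)) dt ≤ μ·exp(-x/μ). -/

import Mathlib

open MeasureTheory Set Filter

/-- Marshall–Proschan: if `F` is an NBUE life distribution with finite mean `μ > 0`,
then `∫_x^∞ (1 - F t) dt ≤ μ * exp (-x/μ)` for all `x ≥ 0`. -/
theorem nbue_survival_integral_le_exp
    (F : ℝ → ℝ) (μ : ℝ) (hμ : 0 < μ)
    (hmono : Monotone F) (hneg : ∀ t < (0:ℝ), F t = 0)
    (hlim : Tendsto F atTop (nhds 1))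
    (hint : IntegrableOn (fun t => 1 - F t) (Ioi 0))
    (hmean : ∫ t in Ioi (0:ℝ), (1 - F t) = μ)
    (hNBUE : ∀ t ≥ (0:ℝ), 0 < 1 - F t →
      ∫ x in Ioi t, (1 - F x) ≤ μ * (1 - F t)) :
    ∀ x ≥ (0:ℝ), ∫ t in Ioi x, (1 - F t) ≤ μ * Real.exp (-x / μ) := by
  intro x hx
  set g : ℝ → ℝ := fun t => 1 - F t with hgdef
  have hanti : Antitone g := fun a b hab => sub_le_sub_left (hmono hab) 1
  have hFle1 : ∀ t, F t ≤ 1 := fun t => ge_of_tendsto hlim (Filter.eventually_atTop.2 ⟨t, fun b hb => hmono hb⟩)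
  have hg0 : ∀ t, 0 ≤ g t := fun t => sub_nonneg.2 (hFle1 t)
  have hIocInt : ∀ u v : ℝ, u ≤ v → IntegrableOn g (Ioc u v) :=
    fun u v huv => (intervalIntegrable_iff_integrableOn_Ioc_of_le huv).1
      (hanti.intervalIntegrable)
  have hintIoi : ∀ u : ℝ, IntegrableOn g (Ioi u) := by
    intro u
    rcases le_or_gt 0 u with h | h
    · exact hint.mono_set (Ioi_subset_Ioi h)
    · rw [← Ioc_union_Ioi_eq_Ioi h.le]
      exact (hIocInt u 0 h.le).union hint
  set G : ℝ → ℝ := fun u => ∫ t in Ioi u, g t with hGdef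
  have hsplit : ∀ u v : ℝ, u ≤ v → G u = (∫ t in Ioc u v, g t) + G v := by
    intro u v huv
    rw [hGdef]
    simp only
    rw [← Ioc_union_Ioi_eq_Ioi huv,
      setIntegral_union (Ioc_disjoint_Ioi le_rfl) measurableSet_Ioi
        (hIocInt u v huv) (hintIoi v)]
  have hG0 : G 0 = μ := hmean
  have hGeq : ∀ u : ℝ, G u = μ - ∫ t in (0:ℝ)..u, g t := by
    intro u
    rcases le_or_gt 0 u with h | h
    · rw [intervalIntegral.integral_of_le h, ← hG0, hsplit 0 u h]
      ring
    · rw [intervalIntegral.integral_of_ge h.le, ← hG0, hsplit u 0 h.le]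
      ring
  have hGcont : Continuous G := by
    have : Continuous fun u => μ - ∫ t in (0:ℝ)..u, g t :=
      continuous_const.sub
        (intervalIntegral.continuous_primitive (fun a b => hanti.intervalIntegrable) 0)
    exact this.congr fun u => (hGeq u).symm
  have hGnonneg : ∀ u, 0 ≤ G u :=
    fun u => setIntegral_nonneg measurableSet_Ioi fun t _ => hg0 t
  rcases lt_or_eq_of_le (hFle1 x) with hFx | hFx
  · -- main case : F x < 1, apply Gronwall on [0, x]
    have key := le_gronwallBound_of_liminf_deriv_right_le (f := G)
      (f' := fun u => (-1/μ) * G u) (δ := μ) (K := -1/μ) (ε := 0) (a := 0) (b := x)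
      hGcont.continuousOn ?_ hG0.le ?_ x ⟨hx, le_refl x⟩
    · rw [gronwallBound_ε0] at key
      have : -1/μ * (x - 0) = -x / μ := by ring
      rwa [this] at key
    · -- liminf condition
      intro u hu r hr
      have hqle : ∀ z ∈ Ioo u x, (z - u)⁻¹ * (G z - G u) ≤ -1/μ * G z := by
        intro z hz
        have hzu : 0 < z - u := sub_pos.2 hz.1
        have hGux : G z - G u = -∫ t in Ioc u z, g t := by
          rw [hsplit u z hz.1.le]; ring
        have hlow : (z - u) * g z ≤ ∫ t in Ioc u z, g t := by
          have := setIntegral_mono_on ((integrableOn_const (hs := by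
            simp [Real.volume_Ioc]))) (hIocInt u z hz.1.le) measurableSet_Ioc
            (fun t ht => hanti ht.2 : ∀ t ∈ Ioc u z, (fun _ => g z) t ≤ g t)
          simpa [Real.volume_Ioc, ENNReal.toReal_ofReal hzu.le, max_eq_left hzu.le] using this
        have hgz : 0 < g z := sub_pos.2 (lt_of_le_of_lt (hmono hz.2.le) hFx)
        have hzn : (0:ℝ) ≤ z := le_trans hu.1 hz.1.le
        have hNB : G z ≤ μ * g z := hNBUE z hzn hgz
        have hkey : g z ≤ (z - u)⁻¹ * ∫ t in Ioc u z, g t := by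
          calc g z = (z - u)⁻¹ * ((z - u) * g z) := by field_simp
            _ ≤ (z - u)⁻¹ * ∫ t in Ioc u z, g t :=
              mul_le_mul_of_nonneg_left hlow (inv_nonneg.2 hzu.le)
        have h1 : (z - u)⁻¹ * (G z - G u) ≤ -g z := by
          rw [hGux, mul_neg]
          linarith
        have hdiv : 1/μ * G z ≤ g z := by
          rw [div_mul_eq_mul_div, one_mul, div_le_iff₀ hμ]
          linarith
        have h2 : -g z ≤ -1/μ * G z := by
          rw [neg_div, neg_mul]
          exact neg_le_neg hdiv
        exact h1.trans h2
      have hev1 : ∀ᶠ z in nhdsWithin u (Ioi u), z ∈ Ioo u x :=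
        Ioo_mem_nhdsGT_of_mem ⟨le_refl u, hu.2⟩
      have htend : Tendsto (fun z => -1/μ * G z) (nhdsWithin u (Ioi u))
          (nhds (-1/μ * G u)) :=
        ((continuous_const.mul hGcont).tendsto u).mono_left nhdsWithin_le_nhds
      have hev2 : ∀ᶠ z in nhdsWithin u (Ioi u), -1/μ * G z < r :=
        htend.eventually (Filter.Tendsto.eventually_lt_const hr tendsto_id) |>.mono (fun z h => h)
      refine ((hev1.and hev2).mono ?_).frequently
      intro z ⟨hz1, hz2⟩
      exact lt_of_le_of_lt (hqle z hz1) hz2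
    · intro u hu
      simp
  · -- degenerate case : F x = 1, the integral is 0
    have hzero : ∀ t ∈ Ioi x, g t = 0 := by
      intro t ht
      have : (1:ℝ) ≤ F t := hFx ▸ hmono (le_of_lt ht)
      have := hFle1 t
      simp only [hgdef]; linarith
    have : G x = 0 := by
      rw [hGdef]
      simp only
      rw [setIntegral_congr_fun measurableSet_Ioi hzero, integral_zero]
    rw [hGdef] at this
    simp only at this
    rw [this]
    positivity
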